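/- With the extended bounds and 1-marginals of the previous construction (from a {0,1}-valued (n,n,n)-array p), a feasible nonnegative integer (n+1,n+1,n+1)-array x with entry x_{n+1,n+1,n+1} = 2n exists if and only if there is a nonnegative integer (n,n,n)-array dominated by p with all 1-marginals equal to 1. Moreover, for any feasible extended array x, its restriction (x_{i,j,k})_{1≤i,j,k≤n} has all 1-marginals equal to 1 and is dominated by p if and only if x_{n+1,n+1,n+1} = 2n. -/
import Mathlib


/-- Extended entry upper bounds on (n+1,n+1,n+1)-arrays from a 0/1 array `p`
(index `none` is the new index n+1). -/
def extBound (n : ℕ) (p : Fin n → Fin n → Fin n → ℕ) :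
    Option (Fin n) → Option (Fin n) → Option (Fin n) → ℕ := fun a b c =>
  match a, b, c with
  | none, none, none => 2 * n
  | some _, some _, none => 0
  | some _, none, some _ => 0
  | none, some _, some _ => 0
  | some _, none, none => 1
  | none, some _, none => 1
  | none, none, some _ => 1
  | some i, some j, some k => p i j k

/-- Extended 1-marginal values: 1 on old indices, 2n on the new index. -/
def extMarg (n : ℕ) : Option (Fin n) → ℕ := fun a =>
  match a with
  | none => 2 * n
  | some _ => 1

/-- The explicit witness array. -/
def extWitness (n : ℕ) :
    Option (Fin n) → Option (Fin n) → Option (Fin n) → ℕ := fun a b c =>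
  match a, b, c with
  | some _, none, none => 1
  | none, some _, none => 1
  | none, none, some _ => 1
  | _, _, _ => 0

lemma aux_restrict (n : ℕ) (p : Fin n → Fin n → Fin n → ℕ)
    (x : Option (Fin n) → Option (Fin n) → Option (Fin n) → ℕ)
    (hxb : ∀ a b c, x a b c ≤ extBound n p a b c)
    (hA : ∀ a, ∑ b, ∑ c, x a b c = extMarg n a)
    (hB : ∀ b, ∑ a, ∑ c, x a b c = extMarg n b)
    (hC : ∀ c, ∑ a, ∑ b, x a b c = extMarg n c) :
    ((∀ i j k, x (some i) (some j) (some k) ≤ p i j k) ∧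
     (∀ i, ∑ j, ∑ k, x (some i) (some j) (some k) = 1) ∧
     (∀ j, ∑ i, ∑ k, x (some i) (some j) (some k) = 1) ∧
     (∀ k, ∑ i, ∑ j, x (some i) (some j) (some k) = 1)) ↔
     x none none none = 2 * n := by
  have e1 : ∀ i j : Fin n, x (some i) (some j) none = 0 :=
    fun i j => Nat.le_zero.mp (hxb (some i) (some j) none)
  have e2 : ∀ i k : Fin n, x (some i) none (some k) = 0 :=
    fun i k => Nat.le_zero.mp (hxb (some i) none (some k))
  have e3 : ∀ j k : Fin n, x none (some j) (some k) = 0 :=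
    fun j k => Nat.le_zero.mp (hxb none (some j) (some k))
  have hAi : ∀ i : Fin n,
      x (some i) none none + ∑ j, ∑ k, x (some i) (some j) (some k) = 1 := by
    intro i
    have := hA (some i)
    simpa [Fintype.sum_option, e1, e2, extMarg] using this
  have hBj : ∀ j : Fin n,
      x none (some j) none + ∑ i, ∑ k, x (some i) (some j) (some k) = 1 := by
    intro j
    have := hB (some j)
    simpa [Fintype.sum_option, e1, e3, extMarg] using this
  have hCk : ∀ k : Fin n,
      x none none (some k) + ∑ i, ∑ j, x (some i) (some j) (some k) = 1 := by
    intro k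
    have := hC (some k)
    simpa [Fintype.sum_option, e2, e3, extMarg] using this
  have hAn : x none none none + ∑ k, x none none (some k)
      + ∑ j, x none (some j) none = 2 * n := by
    have := hA none
    simp only [Fintype.sum_option, e3, Finset.sum_const_zero, add_zero, extMarg] at this
    omega
  have hBn : x none none none + ∑ k, x none none (some k)
      + ∑ i, x (some i) none none = 2 * n := by
    have := hB none
    simp only [Fintype.sum_option, e2, Finset.sum_const_zero, add_zero, extMarg] at this
    omega
  constructor
  · rintro ⟨_, h2, h3, h4⟩
    have f2 : ∀ j : Fin n, x none (some j) none = 0 := by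
      intro j; have := hBj j; rw [h3 j] at this; omega
    have f3 : ∀ k : Fin n, x none none (some k) = 0 := by
      intro k; have := hCk k; rw [h4 k] at this; omega
    rw [Finset.sum_congr rfl (fun j _ => f2 j), Finset.sum_congr rfl (fun k _ => f3 k)] at hAn
    simpa using hAn
  · intro hcorner
    rw [hcorner] at hAn hBn
    have s1 : ∑ k, x none none (some k) = 0 := by omega
    have s2 : ∑ j, x none (some j) none = 0 := by omega
    have s3 : ∑ i, x (some i) none none = 0 := by omega
    have f1 : ∀ i : Fin n, x (some i) none none = 0 := by
      intro i
      exact (Finset.sum_eq_zero_iff.mp s3) i (Finset.mem_univ i)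
    have f2 : ∀ j : Fin n, x none (some j) none = 0 := by
      intro j
      exact (Finset.sum_eq_zero_iff.mp s2) j (Finset.mem_univ j)
    have f3 : ∀ k : Fin n, x none none (some k) = 0 := by
      intro k
      exact (Finset.sum_eq_zero_iff.mp s1) k (Finset.mem_univ k)
    refine ⟨fun i j k => hxb (some i) (some j) (some k), ?_, ?_, ?_⟩
    · intro i; have := hAi i; rw [f1 i] at this; omega
    · intro j; have := hBj j; rw [f2 j] at this; omega
    · intro k; have := hCk k; rw [f3 k] at this; omega

/-- A feasible extended array with corner entry 2n exists iff there is a table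
dominated by p with all 1-marginals 1; moreover for any feasible extended
array, its restriction is such a table iff the corner entry equals 2n. -/
theorem corner_full_iff_matching (n : ℕ)
    (p : Fin n → Fin n → Fin n → ℕ) (hp : ∀ i j k, p i j k ≤ 1) :
    ((∃ x : Option (Fin n) → Option (Fin n) → Option (Fin n) → ℕ,
      (∀ a b c, x a b c ≤ extBound n p a b c) ∧
      (∀ a, ∑ b, ∑ c, x a b c = extMarg n a) ∧
      (∀ b, ∑ a, ∑ c, x a b c = extMarg n b) ∧
      (∀ c, ∑ a, ∑ b, x a b c = extMarg n c) ∧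
      x none none none = 2 * n) ↔
    (∃ z : Fin n → Fin n → Fin n → ℕ,
      (∀ i j k, z i j k ≤ p i j k) ∧
      (∀ i, ∑ j, ∑ k, z i j k = 1) ∧
      (∀ j, ∑ i, ∑ k, z i j k = 1) ∧
      (∀ k, ∑ i, ∑ j, z i j k = 1))) ∧
    (∀ x : Option (Fin n) → Option (Fin n) → Option (Fin n) → ℕ,
      (∀ a b c, x a b c ≤ extBound n p a b c) →
      (∀ a, ∑ b, ∑ c, x a b c = extMarg n a) →
      (∀ b, ∑ a, ∑ c, x a b c = extMarg n b) →
      (∀ c, ∑ a, ∑ b, x a b c = extMarg n c) →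
      (((∀ i j k, x (some i) (some j) (some k) ≤ p i j k) ∧
        (∀ i, ∑ j, ∑ k, x (some i) (some j) (some k) = 1) ∧
        (∀ j, ∑ i, ∑ k, x (some i) (some j) (some k) = 1) ∧
        (∀ k, ∑ i, ∑ j, x (some i) (some j) (some k) = 1)) ↔
        x none none none = 2 * n)) := by
  constructor
  · constructor
    · rintro ⟨x, hxb, hA, hB, hC, hcorner⟩
      obtain ⟨h1, h2, h3, h4⟩ :=
        (aux_restrict n p x hxb hA hB hC).mpr hcorner
      exact ⟨fun i j k => x (some i) (some j) (some k), h1, h2, h3, h4⟩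
    · rintro ⟨z, hz1, hz2, hz3, hz4⟩
      refine ⟨fun a b c =>
        match a, b, c with
        | some i, some j, some k => z i j k
        | none, none, none => 2 * n
        | _, _, _ => 0, ?_, ?_, ?_, ?_, rfl⟩
      · rintro (_ | i) (_ | j) (_ | k) <;> simp [extBound, hz1]
      · rintro (_ | i) <;>
          simp [Fintype.sum_option, extMarg, hz2]
      · rintro (_ | j) <;>
          simp [Fintype.sum_option, extMarg, hz3]
      · rintro (_ | k) <;>
          simp [Fintype.sum_option, extMarg, hz4]
  · intro x hxb hA hB hC
    exact aux_restrict n p x hxb hA hB hC
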